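/- arXiv:1505.01578 — 3 statements merged into one kernel-verified Lean document; each statement's English description precedes it below -/
import Mathlib

section
/- Let 1 ≤ k ≤ n and let λ ∈ Γ_k, where Γ_k = {λ ∈ ℝⁿ : σ_1(λ) > 0, σ_2(λ) > 0, …, σ_k(λ) > 0}. Then for every index i one has σ_{k-1}(λ|λ_i) > 0; in particular, for k = 2, σ_1(λ) − λ_i > 0 for every i. -/
open Polynomial

namespace GardingAux

/-! ### Basic facts about `Multiset.esymm` -/

lemma esymm_zero' (u : Multiset ℝ) : u.esymm 0 = 1 := by
  simp [Multiset.esymm]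

lemma esymm_eq_zero (u : Multiset ℝ) {m : ℕ} (h : Multiset.card u < m) : u.esymm m = 0 := by
  rw [Multiset.esymm, Multiset.powersetCard_eq_empty _ h]
  simp

lemma esymm_cons (a : ℝ) (u : Multiset ℝ) (m : ℕ) :
    (a ::ₘ u).esymm (m + 1) = u.esymm (m + 1) + a * u.esymm m := by
  rw [Multiset.esymm, Multiset.powersetCard_cons, Multiset.map_add, Multiset.sum_add,
    Multiset.map_map]
  have h2 : (Multiset.map (Multiset.prod ∘ Multiset.cons a) (Multiset.powersetCard m u)).sum
      = a * u.esymm m := by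
    rw [Multiset.esymm, ← Multiset.sum_map_mul_left]
    apply congrArg
    apply Multiset.map_congr rfl
    intro v _
    simp [Multiset.prod_cons]
  rw [h2]
  rfl

lemma esymm_alt (a : ℝ) (u : Multiset ℝ) : ∀ m : ℕ,
    u.esymm m = ∑ r ∈ Finset.range (m + 1), (-a) ^ r * (a ::ₘ u).esymm (m - r)
  | 0 => by simp [esymm_zero']
  | (m + 1) => by
    rw [Finset.sum_range_succ']
    simp only [Nat.succ_sub_succ, pow_zero, one_mul, Nat.sub_zero]
    have h1 : ∑ r ∈ Finset.range (m + 1), (-a) ^ (r + 1) * (a ::ₘ u).esymm (m - r)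
        = (-a) * ∑ r ∈ Finset.range (m + 1), (-a) ^ r * (a ::ₘ u).esymm (m - r) := by
      rw [Finset.mul_sum]
      apply Finset.sum_congr rfl
      intro r _
      ring
    rw [h1, ← esymm_alt a u m, esymm_cons a u m]
    ring

/-! ### Positivity helpers -/

lemma multiset_prod_pos (v : Multiset ℝ) (h : ∀ b ∈ v, 0 < b) : 0 < v.prod := by
  induction v using Multiset.induction_on with
  | empty => simp
  | cons a u ih =>
    rw [Multiset.prod_cons]
    exact mul_pos (h a (Multiset.mem_cons_self a u))
      (ih fun b hb => h b (Multiset.mem_cons_of_mem hb))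

lemma multiset_sum_pos (v : Multiset ℝ) (h : ∀ b ∈ v, 0 < b) (hv : v ≠ 0) : 0 < v.sum := by
  induction v using Multiset.induction_on with
  | empty => exact absurd rfl hv
  | cons a u ih =>
    rw [Multiset.sum_cons]
    rcases eq_or_ne u 0 with rfl | hu
    · simpa using h a (Multiset.mem_cons_self a 0)
    · have h1 := ih (fun b hb => h b (Multiset.mem_cons_of_mem hb)) hu
      have h2 := h a (Multiset.mem_cons_self a u)
      linarith

lemma esymm_pos_of_pos (t : Multiset ℝ) (m : ℕ) (h : ∀ b ∈ t, 0 < b)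
    (hm : m ≤ Multiset.card t) : 0 < t.esymm m := by
  rw [Multiset.esymm]
  apply multiset_sum_pos
  · intro s hs
    rw [Multiset.mem_map] at hs
    obtain ⟨v, hv, rfl⟩ := hs
    rw [Multiset.mem_powersetCard] at hv
    exact multiset_prod_pos v fun b hb => h b (Multiset.mem_of_le hv.1 hb)
  · intro h0
    rw [Multiset.map_eq_zero] at h0
    have hcard := Multiset.card_powersetCard m t
    rw [h0, Multiset.card_zero] at hcard
    exact absurd hcard.symm (Nat.choose_pos hm).ne'

/-! ### Deleting a nonpositive entry -/

lemma esymm_erase_pos {a : ℝ} (ha : a ≤ 0) (u : Multiset ℝ) (k : ℕ)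
    (hpos : ∀ j, 1 ≤ j → j ≤ k → 0 < (a ::ₘ u).esymm j) :
    ∀ m, m ≤ k → 0 < u.esymm m := by
  intro m hm
  rcases Nat.eq_zero_or_pos m with rfl | hm1
  · rw [esymm_zero']; norm_num
  rw [esymm_alt a u m]
  apply Finset.sum_pos'
  · intro r hr
    rw [Finset.mem_range, Nat.lt_succ_iff] at hr
    apply mul_nonneg (pow_nonneg (by linarith) r)
    rcases Nat.eq_or_lt_of_le hr with rfl | hrm
    · rw [Nat.sub_self, esymm_zero']; norm_num
    · exact le_of_lt (hpos (m - r) (by omega) (by omega))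
  · refine ⟨0, Finset.mem_range.mpr (by omega), ?_⟩
    simpa using hpos m hm1 hm

lemma le_card_of_cons_nonpos {a : ℝ} (ha : a ≤ 0) (u : Multiset ℝ) (k : ℕ) (hk1 : 1 ≤ k)
    (hk : k ≤ Multiset.card u + 1)
    (hpos : ∀ j, 1 ≤ j → j ≤ k → 0 < (a ::ₘ u).esymm j) : k ≤ Multiset.card u := by
  by_contra hcon
  have hcard : Multiset.card u < k := by omega
  have hposk := esymm_erase_pos ha u k hpos k le_rfl
  rw [esymm_eq_zero u hcard] at hposk
  exact lt_irrefl 0 hposk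

/-! ### The sum-of-squares identity for top elementary symmetric functions -/

lemma esymm_top_sq (m : Multiset ℝ) : 2 ≤ Multiset.card m →
    2 * m.esymm (Multiset.card m) * m.esymm (Multiset.card m - 2)
      ≤ m.esymm (Multiset.card m - 1) ^ 2 := by
  induction m using Multiset.induction_on with
  | empty => intro h; simp at h
  | cons a u ih =>
    intro h2
    rw [Multiset.card_cons] at h2 ⊢
    rcases Nat.lt_or_ge (Multiset.card u) 2 with hc | hc
    · -- card u = 1
      have hc1 : Multiset.card u = 1 := by omega
      obtain ⟨b, rfl⟩ := Multiset.card_eq_one.mp hc1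
      have e10 : ({b} : Multiset ℝ).esymm 0 = 1 := esymm_zero' _
      have e11 : ({b} : Multiset ℝ).esymm 1 = b := by
        rw [← Multiset.cons_zero b, esymm_cons b 0 0, esymm_zero']
        rw [esymm_eq_zero (0 : Multiset ℝ) (by simp)]
        ring
      have e12 : ({b} : Multiset ℝ).esymm 2 = 0 := esymm_eq_zero _ (by simp)
      rw [hc1]
      norm_num
      rw [esymm_zero']
      nlinarith [sq_nonneg (a - b), sq_nonneg a, sq_nonneg b]
    · obtain ⟨c, hc'⟩ : ∃ c, Multiset.card u = c + 2 := ⟨Multiset.card u - 2, by omega⟩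
      rw [hc']
      have i1 : c + 2 + 1 - 1 = c + 2 := by omega
      have i2 : c + 2 + 1 - 2 = c + 1 := by omega
      rw [i1, i2]
      have h3 : (a ::ₘ u).esymm (c + 2 + 1) = u.esymm (c + 3) + a * u.esymm (c + 2) :=
        esymm_cons a u (c + 2)
      have hu3 : u.esymm (c + 3) = 0 := esymm_eq_zero u (by omega)
      have h2' : (a ::ₘ u).esymm (c + 2) = u.esymm (c + 2) + a * u.esymm (c + 1) :=
        esymm_cons a u (c + 1)
      have h1' : (a ::ₘ u).esymm (c + 1) = u.esymm (c + 1) + a * u.esymm c :=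
        esymm_cons a u c
      have hIH := ih (by omega)
      rw [hc'] at hIH
      have i3 : c + 2 - 1 = c + 1 := by omega
      have i4 : c + 2 - 2 = c := by omega
      rw [i3, i4] at hIH
      rw [show c + 2 + 1 = c + 3 by ring] at h3 ⊢
      rw [h3, hu3, h2', h1']
      have key : 0 ≤ a ^ 2 * (u.esymm (c + 1) ^ 2 - 2 * u.esymm (c + 2) * u.esymm c) :=
        mul_nonneg (sq_nonneg a) (by linarith)
      nlinarith [sq_nonneg (u.esymm (c + 2))]

/-! ### Real-rootedness and derivatives -/

lemma derivative_real_rooted {p : ℝ[X]} (h : Multiset.card p.roots = p.natDegree) :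
    Multiset.card (derivative p).roots = (derivative p).natDegree ∧
      (derivative p).natDegree = p.natDegree - 1 := by
  rcases Nat.eq_zero_or_pos p.natDegree with h0 | h0
  · rw [derivative_of_natDegree_zero h0, h0]
    simp [Polynomial.roots_zero]
  · have h1 := p.card_roots_le_derivative
    have h2 := (derivative p).card_roots'
    have h3 := p.natDegree_derivative_le
    exact ⟨by omega, by omega⟩

lemma iterate_derivative_real_rooted {p : ℝ[X]} (h : Multiset.card p.roots = p.natDegree)
    (j : ℕ) :
    Multiset.card (derivative^[j] p).roots = (derivative^[j] p).natDegree ∧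
      (derivative^[j] p).natDegree = p.natDegree - j := by
  induction j with
  | zero => exact ⟨h, rfl⟩
  | succ j ih =>
    obtain ⟨ih1, ih2⟩ := ih
    rw [Function.iterate_succ_apply']
    obtain ⟨d1, d2⟩ := derivative_real_rooted ih1
    exact ⟨d1, by omega⟩

lemma coeff_eq_esymm_roots {r : ℝ[X]} (h : Multiset.card r.roots = r.natDegree)
    {n : ℕ} (hn : n ≤ r.natDegree) :
    r.coeff n = r.leadingCoeff * ((r.roots.map fun z => -z).esymm (r.natDegree - n)) := by
  conv_lhs => rw [← Polynomial.C_leadingCoeff_mul_prod_multiset_X_sub_C h]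
  rw [Polynomial.coeff_C_mul]
  congr 1
  have hmap : (r.roots.map fun a => X - C a)
      = ((r.roots.map fun z => -z).map fun a => X + C a) := by
    rw [Multiset.map_map]
    apply Multiset.map_congr rfl
    intro z _
    simp [sub_eq_add_neg]
  have hle : n ≤ Multiset.card (r.roots.map fun z => -z) := by
    rw [Multiset.card_map, h]; exact hn
  rw [hmap, Multiset.prod_X_add_C_coeff _ hle, Multiset.card_map, h]

/-! ### descFactorial arithmetic -/

lemma descFactorial_step (q : ℕ) : ∀ n : ℕ,
    (n + 1) * ((n + 1 + q).descFactorial q) = (n + q + 1) * ((n + q).descFactorial q) := by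
  induction q with
  | zero => intro n; simp [Nat.descFactorial_zero]
  | succ q ih =>
    intro n
    have e1 : n + 1 + (q + 1) = (n + q + 1) + 1 := by omega
    have e2 : n + (q + 1) = (n + q) + 1 := by omega
    rw [e1, e2, Nat.succ_descFactorial_succ, Nat.succ_descFactorial_succ]
    have e3 : n + q + 1 + 1 = n + q + 2 := by omega
    rw [e3]
    have := ih n
    have e4 : n + 1 + q = n + q + 1 := by omega
    rw [e4] at this
    calc (n + 1) * ((n + q + 2) * ((n + q + 1).descFactorial q))
        = (n + q + 2) * ((n + 1) * ((n + q + 1).descFactorial q)) := by ring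
      _ = (n + q + 2) * ((n + q + 1) * ((n + q).descFactorial q)) := by rw [this]
      _ = (n + q + 1 + 1) * ((n + q + 1) * ((n + q).descFactorial q)) := by ring

lemma descFactorial_ineq (q : ℕ) :
    ((1 + q).descFactorial q) * ((1 + q).descFactorial q)
      ≤ 2 * (((2 + q).descFactorial q) * ((q).descFactorial q)) := by
  have h0 := descFactorial_step q 0
  have h1 := descFactorial_step q 1
  simp only [Nat.zero_add, Nat.one_mul] at h0
  -- h0 : (1 + q).descFactorial q = (q + 1) * (q.descFactorial q)
  -- h1 : 2 * ((2 + q).descFactorial q) = (1 + q + 1) * ((1 + q).descFactorial q)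
  have e1 : 1 + 1 + q = 2 + q := by omega
  have e2 : 1 + q + 1 = q + 2 := by omega
  rw [e1, e2] at h1
  calc ((1 + q).descFactorial q) * ((1 + q).descFactorial q)
      = ((q + 1) * (q.descFactorial q)) * ((1 + q).descFactorial q) := by rw [h0]
    _ ≤ ((q + 2) * (q.descFactorial q)) * ((1 + q).descFactorial q) := by
        apply Nat.mul_le_mul_right
        apply Nat.mul_le_mul_right
        omega
    _ = (2 * ((2 + q).descFactorial q)) * (q.descFactorial q) := by
        rw [h1]; ring
    _ = 2 * (((2 + q).descFactorial q) * ((q).descFactorial q)) := by ring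

/-! ### The weak Newton inequality -/

lemma newton_weak (t : Multiset ℝ) (K : ℕ)
    (h0 : 0 < t.esymm K) (h2 : 0 < t.esymm (K + 2)) :
    t.esymm (K + 2) * t.esymm K ≤ t.esymm (K + 1) ^ 2 := by
  have hke : K + 2 ≤ Multiset.card t := by
    by_contra hc
    rw [esymm_eq_zero t (by omega)] at h2
    linarith
  set e := Multiset.card t with he
  set p : ℝ[X] := (t.map fun a => X + C a).prod with hp
  have hpdeg : p.natDegree = e := by
    rw [hp, Polynomial.natDegree_multiset_prod_of_monic]
    · rw [Multiset.map_map]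
      have : ((t.map fun a => (X + C a).natDegree)).sum = ((t.map fun _ => 1)).sum := by
        apply congrArg
        apply Multiset.map_congr rfl
        intro b _
        exact natDegree_X_add_C b
      rw [show (Multiset.map (Polynomial.natDegree ∘ fun a => X + C a) t)
            = t.map fun a => (X + C a).natDegree from rfl, this]
      simp [Multiset.map_const', Multiset.sum_replicate, smul_eq_mul]
      exact he.symm
    · intro f hf
      rw [Multiset.mem_map] at hf
      obtain ⟨b, _, rfl⟩ := hf
      exact monic_X_add_C b
  have hproots : p.roots = t.map fun a => -a := by
    rw [hp, Polynomial.roots_multiset_prod]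
    · rw [Multiset.bind_map]
      refine (Multiset.bind_congr ?_).trans (Multiset.bind_singleton t (fun a : ℝ => -a))
      intro b _
      show (X + C b).roots = {-b}
      rw [show X + C b = X - C (-b) by simp [sub_eq_add_neg]]
      exact roots_X_sub_C (-b)
    · intro hmem
      rw [Multiset.mem_map] at hmem
      obtain ⟨b, _, hb⟩ := hmem
      exact X_add_C_ne_zero b hb
  have hrr : Multiset.card p.roots = p.natDegree := by
    rw [hproots, Multiset.card_map, hpdeg]
  set q := e - (K + 2) with hq
  set r := derivative^[q] p with hr
  obtain ⟨hr1, hr2⟩ := iterate_derivative_real_rooted hrr q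
  have hrdeg : r.natDegree = K + 2 := by
    show ((derivative^[q] p : ℝ[X])).natDegree = K + 2
    rw [hr2, hpdeg]
    omega
  have hcoeff : ∀ n, n ≤ K + 2 →
      r.coeff n = ((n + q).descFactorial q : ℝ) * t.esymm (K + 2 - n) := by
    intro n hn
    have hnq : n + q ≤ Multiset.card t := by omega
    rw [hr, Polynomial.coeff_iterate_derivative, hp,
      Multiset.prod_X_add_C_coeff t hnq, nsmul_eq_mul]
    have : Multiset.card t - (n + q) = K + 2 - n := by omega
    rw [this]
  set w := r.roots.map (fun z => -z) with hw
  have hr1' : Multiset.card r.roots = r.natDegree := hr1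
  have hcw : Multiset.card w = K + 2 := by
    rw [hw, Multiset.card_map, hr1', hrdeg]
  have hDD := esymm_top_sq w (by omega)
  rw [hcw] at hDD
  have i1 : K + 2 - 1 = K + 1 := by omega
  have i2 : K + 2 - 2 = K := by omega
  rw [i1, i2] at hDD
  have hlc : ∀ n, n ≤ K + 2 → r.coeff n = r.leadingCoeff * w.esymm (K + 2 - n) := by
    intro n hn
    rw [coeff_eq_esymm_roots hr1' (by omega : n ≤ r.natDegree), hrdeg]
  -- the three coefficients
  have c0 := (hcoeff 0 (by omega)).symm.trans (hlc 0 (by omega))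
  have c1 := (hcoeff 1 (by omega)).symm.trans (hlc 1 (by omega))
  have c2 := (hcoeff 2 (by omega)).symm.trans (hlc 2 (by omega))
  rw [show K + 2 - 0 = K + 2 by omega] at c0
  rw [show K + 2 - 1 = K + 1 by omega] at c1
  rw [show K + 2 - 2 = K by omega] at c2
  rw [show (0 : ℕ) + q = q by omega] at c0
  -- c0 : (q.descFactorial q : ℝ) * t.esymm (K+2) = lc * w.esymm (K+2)
  -- c1 : ((1+q).descFactorial q : ℝ) * t.esymm (K+1) = lc * w.esymm (K+1)
  -- c2 : ((2+q).descFactorial q : ℝ) * t.esymm K = lc * w.esymm K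
  set lc := r.leadingCoeff with hlcdef
  have hDnat := descFactorial_ineq q
  have hD : (((1 + q).descFactorial q : ℝ)) * (((1 + q).descFactorial q : ℝ))
      ≤ 2 * ((((2 + q).descFactorial q : ℝ)) * (((q).descFactorial q : ℝ))) := by
    exact_mod_cast hDnat
  have hD0pos : (0 : ℝ) < ((q).descFactorial q : ℝ) := by
    exact_mod_cast Nat.factorial_pos q |>.trans_eq (Nat.descFactorial_self q).symm
  have hD1pos : (0 : ℝ) < (((1 + q).descFactorial q : ℝ)) := by
    have h0 := descFactorial_step q 0
    simp only [Nat.zero_add, Nat.one_mul] at h0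
    have : 0 < (1 + q).descFactorial q := by
      rw [h0]
      exact Nat.mul_pos (by omega) (by
        rw [Nat.descFactorial_self]; exact Nat.factorial_pos q)
    exact_mod_cast this
  have hD2pos : (0 : ℝ) < (((2 + q).descFactorial q : ℝ)) := by
    nlinarith
  -- multiply hDD by lc^2
  have hsq : 2 * (lc * w.esymm (K + 2)) * (lc * w.esymm K) ≤ (lc * w.esymm (K + 1)) ^ 2 := by
    nlinarith [mul_le_mul_of_nonneg_left hDD (sq_nonneg lc)]
  rw [← c0, ← c1, ← c2] at hsq
  -- hsq : 2 * (D0 * σ(K+2)) * (D2 * σK) ≤ (D1 * σ(K+1))^2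
  set D0 := ((q).descFactorial q : ℝ)
  set D1 := (((1 + q).descFactorial q : ℝ))
  set D2 := (((2 + q).descFactorial q : ℝ))
  have hprod : 0 < t.esymm (K + 2) * t.esymm K := mul_pos h2 h0
  -- D1^2 ≤ 2 D2 D0, so D1^2 * (σ(K+2)σK) ≤ 2 D0 D2 σ(K+2) σK ≤ D1^2 σ(K+1)^2
  have step1 : D1 * D1 * (t.esymm (K + 2) * t.esymm K)
      ≤ 2 * (D2 * D0) * (t.esymm (K + 2) * t.esymm K) := by
    apply mul_le_mul_of_nonneg_right _ hprod.le
    linarith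
  have step2 : 2 * (D2 * D0) * (t.esymm (K + 2) * t.esymm K)
      ≤ D1 * D1 * t.esymm (K + 1) ^ 2 := by
    nlinarith [hsq]
  have final : D1 * D1 * (t.esymm (K + 2) * t.esymm K) ≤ D1 * D1 * t.esymm (K + 1) ^ 2 :=
    le_trans step1 step2
  have hD1sq : 0 < D1 * D1 := mul_pos hD1pos hD1pos
  exact le_of_mul_le_mul_left final hD1sq

/-! ### The main multiset lemma -/

lemma main : ∀ (c : ℕ) (t : Multiset ℝ) (a : ℝ) (k : ℕ), Multiset.card t = c → 1 ≤ k →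
    k ≤ Multiset.card t + 1 →
    (∀ j, 1 ≤ j → j ≤ k → 0 < (a ::ₘ t).esymm j) → 0 < t.esymm (k - 1) := by
  intro c
  induction c using Nat.strong_induction_on with
  | _ c IH =>
    intro t a k hc hk1 hk hpos
    rcases Nat.lt_or_ge k 2 with hk2 | hk2
    · have hke : k = 1 := by omega
      subst hke
      rw [Nat.sub_self, esymm_zero']
      norm_num
    obtain ⟨K, rfl⟩ : ∃ K, k = K + 2 := ⟨k - 2, by omega⟩
    rw [show K + 2 - 1 = K + 1 by omega]
    rcases le_or_gt a 0 with ha | ha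
    · exact esymm_erase_pos ha t (K + 2) hpos (K + 1) (by omega)
    by_cases hex : ∃ b ∈ t, b ≤ 0
    · obtain ⟨b, hbt, hb⟩ := hex
      set u := t.erase b with hu
      have htu : t = b ::ₘ u := (Multiset.cons_erase hbt).symm
      have hcardtu : Multiset.card t = Multiset.card u + 1 := by
        rw [htu, Multiset.card_cons]
      have hswap : ∀ j, (b ::ₘ a ::ₘ u).esymm j = (a ::ₘ t).esymm j := by
        intro j
        rw [htu, Multiset.cons_swap]
      have hpos' : ∀ j, 1 ≤ j → j ≤ K + 2 → 0 < (b ::ₘ a ::ₘ u).esymm j := by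
        intro j hj1 hj2
        rw [hswap]
        exact hpos j hj1 hj2
      have Hau : ∀ m, m ≤ K + 2 → 0 < (a ::ₘ u).esymm m :=
        esymm_erase_pos hb (a ::ₘ u) (K + 2) hpos'
      have hB : K + 2 ≤ Multiset.card (a ::ₘ u) := by
        apply le_card_of_cons_nonpos hb (a ::ₘ u) (K + 2) (by omega) _ hpos'
        rw [Multiset.card_cons]
        omega
      have hcu2 : K + 1 ≤ Multiset.card u := by
        rw [Multiset.card_cons] at hB
        omega
      have hA : ∀ m, m ≤ K + 1 → 0 < u.esymm m := by
        intro m hm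
        rcases Nat.eq_zero_or_pos m with rfl | hm1
        · rw [esymm_zero']; norm_num
        have hres := IH (c - 1) (by omega) u a (m + 1) (by omega) (by omega)
          (by omega) (fun j hj1 hj2 => Hau j (by omega))
        rw [Nat.add_sub_cancel] at hres
        exact hres
      rw [htu, esymm_cons b u K]
      by_contra hcon
      push_neg at hcon
      have hA1 : 0 < u.esymm (K + 1) := hA _ le_rfl
      have hA0 : 0 < u.esymm K := hA _ (by omega)
      have hsk := hpos (K + 2) (by omega) le_rfl
      rw [htu, esymm_cons a (b ::ₘ u) (K + 1), esymm_cons b u (K + 1),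
        esymm_cons b u K] at hsk
      -- hsk : 0 < (u.esymm (K+2) + b * u.esymm (K+1)) + a * (u.esymm (K+1) + b * u.esymm K)
      have f1 : a * (u.esymm (K + 1) + b * u.esymm K) ≤ 0 :=
        mul_nonpos_iff.mpr (Or.inl ⟨ha.le, hcon⟩)
      have f2 : b * u.esymm (K + 1) ≤ 0 :=
        mul_nonpos_iff.mpr (Or.inr ⟨hb, hA1.le⟩)
      have hAk : 0 < u.esymm (K + 2) := by linarith
      have hN := newton_weak u K hA0 hAk
      have p1 : b * u.esymm K ≤ -u.esymm (K + 1) := by linarith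
      have p1' : (b * u.esymm K) * u.esymm (K + 1) ≤ (-u.esymm (K + 1)) * u.esymm (K + 1) :=
        mul_le_mul_of_nonneg_right p1 hA1.le
      have p2 : -(b * u.esymm (K + 1)) < u.esymm (K + 2) := by linarith
      have p3 : (-(b * u.esymm (K + 1))) * u.esymm K < u.esymm (K + 2) * u.esymm K :=
        mul_lt_mul_of_pos_right p2 hA0
      nlinarith [p1', p3, hN]
    · push_neg at hex
      exact esymm_pos_of_pos t (K + 1) (fun b hb => hex b hb) (by omega)

end GardingAux

/-- The k-th elementary symmetric polynomial of `x : Fin n → ℝ`. -/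
def esymm (n k : ℕ) (x : Fin n → ℝ) : ℝ :=
  ∑ s ∈ Finset.powersetCard k (Finset.univ : Finset (Fin n)), ∏ i ∈ s, x i

/-- `σ_m(λ|λ_i)`: the m-th elementary symmetric polynomial of the (n−1)-tuple
obtained from `x` by deleting the entry `x i`. -/
def esymmDel (n m : ℕ) (x : Fin n → ℝ) (i : Fin n) : ℝ :=
  ∑ s ∈ Finset.powersetCard m ((Finset.univ : Finset (Fin n)).erase i), ∏ j ∈ s, x j

/-- for `λ` in the Gårding cone `Γ_k = {σ_1 > 0, …, σ_k > 0}`, one has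
`σ_{k-1}(λ|λ_i) > 0` for every `i`; in particular, for `k = 2`, `σ_1(λ) − λ_i > 0` for every `i`. -/
theorem esymmDel_pos_of_gardingCone (n k : ℕ) (hk1 : 1 ≤ k) (hkn : k ≤ n) (x : Fin n → ℝ)
    (hx : ∀ j, 1 ≤ j → j ≤ k → 0 < esymm n j x) :
    (∀ i, 0 < esymmDel n (k - 1) x i) ∧
      (k = 2 → ∀ i, 0 < esymm n 1 x - x i) := by
  -- bridges to multisets
  have hesymm : ∀ j, esymm n j x = ((Finset.univ : Finset (Fin n)).val.map x).esymm j := by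
    intro j
    rw [Finset.esymm_map_val]
    rfl
  have hdel : ∀ (m : ℕ) (i : Fin n),
      esymmDel n m x i = (((Finset.univ : Finset (Fin n)).erase i).val.map x).esymm m := by
    intro m i
    rw [Finset.esymm_map_val]
    rfl
  have hbridge : ∀ i : Fin n, (Finset.univ : Finset (Fin n)).val.map x
      = x i ::ₘ (((Finset.univ : Finset (Fin n)).erase i).val.map x) := by
    intro i
    rw [Finset.erase_val]
    have hmem : i ∈ (Finset.univ : Finset (Fin n)).val := Finset.mem_univ i
    conv_lhs => rw [← Multiset.cons_erase hmem]
    rw [Multiset.map_cons]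
  have hcard : ∀ i : Fin n,
      Multiset.card ((((Finset.univ : Finset (Fin n)).erase i).val.map x)) = n - 1 := by
    intro i
    rw [Multiset.card_map, ← Finset.card_def, Finset.card_erase_of_mem (Finset.mem_univ i),
      Finset.card_univ, Fintype.card_fin]
  have key : ∀ i : Fin n, 0 < ((((Finset.univ : Finset (Fin n)).erase i).val.map x)).esymm (k - 1) := by
    intro i
    have hn1 : 1 ≤ n := i.pos
    apply GardingAux.main (n - 1) _ (x i) k (hcard i) hk1
    · rw [hcard i]; omega
    · intro j hj1 hj2
      have := hx j hj1 hj2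
      rwa [hesymm j, hbridge i] at this
  constructor
  · intro i
    rw [hdel (k - 1) i]
    exact key i
  · intro hk2 i
    subst hk2
    have h1 := key i
    rw [show (2 : ℕ) - 1 = 1 by omega] at h1
    have heq : esymm n 1 x = (((Finset.univ : Finset (Fin n)).erase i).val.map x).esymm 1 + x i := by
      rw [hesymm 1, hbridge i, GardingAux.esymm_cons (x i) _ 0, GardingAux.esymm_zero']
      ring
    rw [heq]
    linarith
end

section
/- Let n ≥ 2 and λ ∈ Γ_2 = {σ_1 > 0, σ_2 > 0} ⊂ ℝⁿ. Write λ_max = max_i λ_i and λ_min = min_i λ_i, and suppose λ_min ≤ −λ_max/n. Then Σ_{i=1}^n (σ_1(λ) − λ_i)·λ_i² ≥ (λ_max²/n³)·Σ_{i=1}^n (σ_1(λ) − λ_i). -/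
/-- The Gårding cone `Γ₂ = {λ : σ₁(λ) > 0, σ₂(λ) > 0}`. -/
def Gamma2 (n : ℕ) : Set (Fin n → ℝ) := {x | 0 < esymm n 1 x ∧ 0 < esymm n 2 x}

lemma esymm_one_eq (n : ℕ) (x : Fin n → ℝ) : esymm n 1 x = ∑ i, x i := by
  simp [esymm, Finset.powersetCard_one, Finset.sum_map]

lemma esymm_two_eq (n : ℕ) (x : Fin n → ℝ) :
    esymm n 2 x = ∑ p ∈ (Finset.univ : Finset (Fin n × Fin n)).filter (fun p => p.1 < p.2),
      x p.1 * x p.2 := by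
  rw [esymm]
  refine (Finset.sum_bij (fun p _ => ({p.1, p.2} : Finset (Fin n))) ?_ ?_ ?_ ?_).symm
  · intro p hp
    simp only [Finset.mem_filter, Finset.mem_univ, true_and] at hp
    rw [Finset.mem_powersetCard]
    exact ⟨Finset.subset_univ _, Finset.card_pair hp.ne⟩
  · intro p hp q hq he
    simp only [Finset.mem_filter, Finset.mem_univ, true_and] at hp hq
    have he' : ({p.1, p.2} : Finset (Fin n)) = {q.1, q.2} := he
    have h1 : p.1 ∈ ({q.1, q.2} : Finset (Fin n)) := by rw [← he']; simp
    have h2 : p.2 ∈ ({q.1, q.2} : Finset (Fin n)) := by rw [← he']; simp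
    simp only [Finset.mem_insert, Finset.mem_singleton] at h1 h2
    rcases h1 with h1 | h1 <;> rcases h2 with h2 | h2
    · exact absurd hp (by rw [h1, h2]; exact lt_irrefl _)
    · exact Prod.ext h1 h2
    · rw [h1, h2] at hp; exact absurd hp (not_lt.mpr hq.le)
    · exact absurd hp (by rw [h1, h2]; exact lt_irrefl _)
  · intro t ht
    rw [Finset.mem_powersetCard] at ht
    obtain ⟨a, b, hab, rfl⟩ := Finset.card_eq_two.mp ht.2
    rcases hab.lt_or_gt with hlt | hlt
    · exact ⟨(a, b), by simpa using hlt, rfl⟩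
    · exact ⟨(b, a), by simpa using hlt, by rw [Finset.pair_comm]⟩
  · intro p hp
    simp only [Finset.mem_filter, Finset.mem_univ, true_and] at hp
    exact (Finset.prod_pair hp.ne).symm

lemma sq_sum_eq (n : ℕ) (x : Fin n → ℝ) :
    (∑ i, x i) ^ 2 = (∑ i, (x i) ^ 2) + 2 * esymm n 2 x := by
  rw [esymm_two_eq]
  have hsq : (∑ i, x i) ^ 2 = ∑ p ∈ (Finset.univ : Finset (Fin n × Fin n)), x p.1 * x p.2 := by
    rw [sq, Finset.sum_mul_sum, ← Finset.univ_product_univ, Finset.sum_product]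
  rw [hsq]
  classical
  rw [← Finset.sum_filter_add_sum_filter_not Finset.univ (fun p : Fin n × Fin n => p.1 = p.2)]
  have h1 : ∑ p ∈ (Finset.univ : Finset (Fin n × Fin n)).filter (fun p => p.1 = p.2),
      x p.1 * x p.2 = ∑ i, (x i) ^ 2 := by
    refine Finset.sum_nbij' (fun p => p.1) (fun i => (i, i)) ?_ ?_ ?_ ?_ ?_ <;>
      simp +contextual [sq, Prod.ext_iff] <;> intro p hp <;> rw [hp]
  have h2 : ∑ p ∈ (Finset.univ : Finset (Fin n × Fin n)).filter (fun p => ¬ p.1 = p.2),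
      x p.1 * x p.2 = 2 * ∑ p ∈ (Finset.univ : Finset (Fin n × Fin n)).filter
        (fun p => p.1 < p.2), x p.1 * x p.2 := by
    rw [← Finset.sum_filter_add_sum_filter_not ((Finset.univ : Finset (Fin n × Fin n)).filter
      (fun p => ¬ p.1 = p.2)) (fun p => p.1 < p.2), Finset.filter_filter, Finset.filter_filter]
    have e1 : (Finset.univ : Finset (Fin n × Fin n)).filter (fun p => ¬ p.1 = p.2 ∧ p.1 < p.2)
        = (Finset.univ : Finset (Fin n × Fin n)).filter (fun p => p.1 < p.2) := by
      apply Finset.filter_congr; intro p _; simp [and_iff_right_iff_imp]; exact fun h => h.ne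
    have e2 : ∑ p ∈ (Finset.univ : Finset (Fin n × Fin n)).filter
        (fun p => ¬ p.1 = p.2 ∧ ¬ p.1 < p.2), x p.1 * x p.2
        = ∑ p ∈ (Finset.univ : Finset (Fin n × Fin n)).filter (fun p => p.1 < p.2),
          x p.1 * x p.2 := by
      refine Finset.sum_nbij' Prod.swap Prod.swap ?_ ?_ ?_ ?_ ?_
      · intro p hp
        simp only [Finset.mem_filter, Finset.mem_univ, true_and] at hp ⊢
        exact lt_of_le_of_ne (not_lt.mp hp.2) (Ne.symm hp.1)
      · intro p hp
        simp only [Finset.mem_filter, Finset.mem_univ, true_and] at hp ⊢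
        exact ⟨hp.ne', not_lt.mpr hp.le⟩
      · intro p _; exact Prod.swap_swap p
      · intro p _; exact Prod.swap_swap p
      · intro p _; exact mul_comm _ _
    rw [e1, e2]; ring
  rw [h1, h2]

lemma Gamma2_sub_pos (n : ℕ) (x : Fin n → ℝ) (h1 : 0 < esymm n 1 x) (h2 : 0 < esymm n 2 x)
    (i : Fin n) : 0 < esymm n 1 x - x i := by
  have hid := sq_sum_eq n x
  rw [esymm_one_eq] at h1 ⊢
  have hle : (x i) ^ 2 ≤ ∑ j, (x j) ^ 2 :=
    Finset.single_le_sum (fun j _ => sq_nonneg (x j)) (Finset.mem_univ i)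
  nlinarith


/-- for `λ ∈ Γ₂` with `λ_min ≤ −λ_max/n`, one has
`Σ_i (σ_1(λ) − λ_i)·λ_i² ≥ (λ_max²/n³)·Σ_i (σ_1(λ) − λ_i)`. -/
theorem caseA_lower_bound (n : ℕ) (hn : 2 ≤ n) (x : Fin n → ℝ) (hx : x ∈ Gamma2 n)
    (jmax jmin : Fin n) (hjmax : ∀ i, x i ≤ x jmax) (hjmin : ∀ i, x jmin ≤ x i)
    (h : x jmin ≤ -(x jmax) / (n : ℝ)) :
    ((x jmax) ^ 2 / (n : ℝ) ^ 3) * ∑ i, (esymm n 1 x - x i)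
      ≤ ∑ i, (esymm n 1 x - x i) * (x i) ^ 2 := by
  obtain ⟨h1, h2⟩ := hx
  have hn0 : (0 : ℝ) < n := by positivity
  have hf : ∀ i, 0 < esymm n 1 x - x i := fun i => Gamma2_sub_pos n x h1 h2 i
  set S := esymm n 1 x with hS
  set M := x jmax with hM
  set m := x jmin with hm
  -- M > 0
  have hMpos : 0 < M := by
    by_contra hc
    push_neg at hc
    have : S ≤ 0 := by
      rw [hS, esymm_one_eq]
      calc ∑ i, x i ≤ ∑ _i : Fin n, (0 : ℝ) :=
            Finset.sum_le_sum fun i _ => (hjmax i).trans hc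
        _ = 0 := by simp
    linarith
  -- sum of f ≤ n * f_min
  have hsum : ∑ i, (S - x i) ≤ (n : ℝ) * (S - m) := by
    calc ∑ i, (S - x i) ≤ ∑ _i : Fin n, (S - m) :=
          Finset.sum_le_sum fun i _ => by have := hjmin i; linarith
      _ = (n : ℝ) * (S - m) := by rw [Finset.sum_const, Finset.card_univ,
            Fintype.card_fin, nsmul_eq_mul]
  -- (S - m) * m^2 ≤ RHS
  have hsingle : (S - m) * m ^ 2 ≤ ∑ i, (S - x i) * (x i) ^ 2 :=
    Finset.single_le_sum (f := fun i => (S - x i) * (x i) ^ 2)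
      (fun i _ => mul_nonneg (hf i).le (sq_nonneg _)) (Finset.mem_univ jmin)
  -- m^2 ≥ M^2 / n^2
  have hm2 : M ^ 2 / (n : ℝ) ^ 2 ≤ m ^ 2 := by
    rw [div_le_iff₀ (by positivity)]
    have hmn : m * (n : ℝ) ≤ -M := (le_div_iff₀ hn0).mp h
    nlinarith [mul_nonneg (by linarith : (0:ℝ) ≤ -(m * (n:ℝ)) - M)
      (by linarith : (0:ℝ) ≤ -(m * (n:ℝ)) + M)]
  have hfmin : 0 ≤ S - m := (hf jmin).le
  calc (M ^ 2 / (n : ℝ) ^ 3) * ∑ i, (S - x i)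
      ≤ (M ^ 2 / (n : ℝ) ^ 3) * ((n : ℝ) * (S - m)) := by
        apply mul_le_mul_of_nonneg_left hsum (by positivity)
    _ = (M ^ 2 / (n : ℝ) ^ 2) * (S - m) := by field_simp
    _ ≤ m ^ 2 * (S - m) := mul_le_mul_of_nonneg_right hm2 hfmin
    _ = (S - m) * m ^ 2 := by ring
    _ ≤ ∑ i, (S - x i) * (x i) ^ 2 := hsingle
end

section
/- Let 2 ≤ k ≤ n and λ ∈ Γ_k = {λ ∈ ℝⁿ : σ_1(λ) > 0, …, σ_k(λ) > 0}. Then the Maclaurin inequality (σ_{k-1}(λ)/C(n,k−1))^{1/(k−1)} ≥ (σ_k(λ)/C(n,k))^{1/k} holds, where C(n,m) denotes the binomial coefficient n choose m. -/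
open Polynomial Finset

open Polynomial

/-- Derivative reduction: from a real multiset of card `n ≥ 2`, produce one of card `n-1`
whose elementary symmetric functions satisfy `n * σ_j(t) = (n-j) * σ_j(s)` for `j ≤ n-1`. -/
lemma exists_deriv_multiset (s : Multiset ℝ) (hn : 2 ≤ Multiset.card s) :
    ∃ t : Multiset ℝ, Multiset.card t = Multiset.card s - 1 ∧
      ∀ j, j ≤ Multiset.card s - 1 →
        (Multiset.card s : ℝ) * t.esymm j = ((Multiset.card s - j : ℕ) : ℝ) * s.esymm j := by
  set n := Multiset.card s with hns
  set P : ℝ[X] := (s.map fun a => X - C a).prod with hP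
  have hmonic : P.Monic := monic_multiset_prod_of_monic _ _ (fun a _ => monic_X_sub_C a)
  have hdeg : P.natDegree = n := by
    rw [hP, natDegree_multiset_prod_X_sub_C_eq_card]
  have hroots : P.roots = s := roots_multiset_prod_X_sub_C s
  have hcard1 : n ≤ Multiset.card (derivative P).roots + 1 := by
    have := P.card_roots_le_derivative
    rwa [hroots] at this
  have hd_ne : derivative P ≠ 0 := by
    intro h
    rw [h, roots_zero] at hcard1
    simp at hcard1; omega
  have hcard2 : Multiset.card (derivative P).roots ≤ n - 1 := by
    have h1 := (derivative P).card_roots' 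
    have h2 := natDegree_derivative_le P
    omega
  have hcard : Multiset.card (derivative P).roots = n - 1 := by omega
  have hdeg' : (derivative P).natDegree = n - 1 := by
    have h2 := natDegree_derivative_le P
    have h3 : Multiset.card (derivative P).roots ≤ (derivative P).natDegree :=
      (derivative P).card_roots'
    omega
  have hsplits : Splits (derivative P) := by
    rw [splits_iff_card_roots, hcard, hdeg']
  have hfac := hsplits.eq_prod_roots
  have hlc : (derivative P).leadingCoeff = (n : ℝ) := by
    rw [leadingCoeff, hdeg', coeff_derivative]
    have : n - 1 + 1 = n := by omega
    rw [this]
    have hc : P.coeff n = 1 := by rw [← hdeg]; exact hmonic.coeff_natDegree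
    rw [hc, Nat.cast_sub (by omega : 1 ≤ n)]
    push_cast; ring
  refine ⟨(derivative P).roots, hcard, fun j hj => ?_⟩
  have e1 : (derivative P).coeff (n - 1 - j) = ((n - j : ℕ) : ℝ) * ((-1) ^ j * s.esymm j) := by
    rw [coeff_derivative]
    have h1 : n - 1 - j + 1 = n - j := by omega
    have h1' : ((n - 1 - j : ℕ) : ℝ) + 1 = ((n - j : ℕ) : ℝ) := by
      rw [Nat.cast_sub (by omega : j ≤ n - 1), Nat.cast_sub (by omega : j ≤ n),
        Nat.cast_sub (by omega : 1 ≤ n)]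
      push_cast; ring
    rw [h1, h1', hP, Multiset.prod_X_sub_C_coeff s (by omega : n - j ≤ Multiset.card s)]
    have h2 : Multiset.card s - (n - j) = j := by omega
    rw [h2]
    ring
  have e2 : (derivative P).coeff (n - 1 - j) = (n : ℝ) * ((-1) ^ j * ((derivative P).roots.esymm j)) := by
    conv_lhs => rw [hfac]
    rw [coeff_C_mul, hlc,
      Multiset.prod_X_sub_C_coeff _ (by rw [hcard]; omega : n - 1 - j ≤ Multiset.card (derivative P).roots)]
    have h2 : Multiset.card (derivative P).roots - (n - 1 - j) = j := by rw [hcard]; omega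
    rw [h2]
  have e3 := e1.symm.trans e2
  have hne : ((-1 : ℝ)) ^ j ≠ 0 := by
    apply pow_ne_zero; norm_num
  have e4 : (-1:ℝ) ^ j * (((n - j : ℕ) : ℝ) * s.esymm j)
      = (-1:ℝ) ^ j * ((n : ℝ) * (derivative P).roots.esymm j) := by
    rw [show (-1:ℝ) ^ j * (((n - j : ℕ) : ℝ) * s.esymm j) = ((n - j : ℕ) : ℝ) * ((-1) ^ j * s.esymm j) by ring,
      show (-1:ℝ) ^ j * ((n : ℝ) * (derivative P).roots.esymm j) = (n : ℝ) * ((-1) ^ j * (derivative P).roots.esymm j) by ring]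
    exact e3
  have := mul_left_cancel₀ hne e4
  linarith

variable {ι : Type*} [DecidableEq ι]

/-- Sum over (card-1)-subsets equals sum over erasures. -/
lemma sum_powersetCard_pred {A : Finset ι} (hA : A.Nonempty) (f : Finset ι → ℝ) :
    ∑ s ∈ Finset.powersetCard (A.card - 1) A, f s = ∑ i ∈ A, f (A.erase i) := by
  refine (Finset.sum_nbij (fun i => A.erase i) ?_ ?_ ?_ ?_).symm
  · intro i hi
    simp only [mem_powersetCard]
    exact ⟨erase_subset _ _, by rw [card_erase_of_mem hi]⟩
  · intro i hi j hj hij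
    simp only at hij
    by_contra h
    have : i ∈ A.erase j := mem_erase.mpr ⟨h, hi⟩
    rw [← hij] at this
    exact (mem_erase.mp this).1 rfl
  · intro s hs
    simp only [mem_coe, mem_powersetCard] at hs
    have hsub : s ⊆ A := hs.1
    have hApos : 1 ≤ A.card := card_pos.mpr hA
    have hcard : (A \ s).card = 1 := by
      rw [card_sdiff_of_subset hsub, hs.2]
      have hle : s.card ≤ A.card := card_le_card hsub
      omega
    obtain ⟨i, hi⟩ := card_eq_one.mp hcard
    have hiA : i ∈ A := (mem_sdiff.mp (hi ▸ mem_singleton_self i)).1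
    refine ⟨i, mem_coe.mpr hiA, ?_⟩
    simp only
    rw [erase_eq, ← hi, sdiff_sdiff_right_self, inf_eq_inter,
      inter_eq_right.mpr hsub]
  · intro i hi; rfl

lemma powersetCard_erase_eq_filter (A : Finset ι) (i : ι) (r : ℕ) :
    Finset.powersetCard r (A.erase i)
      = (Finset.powersetCard r A).filter (fun s => i ∉ s) := by
  ext s
  simp only [mem_powersetCard, mem_filter, subset_erase]
  tauto

/-- Double counting: each r-subset arises from `card A - r` erasures. -/
lemma sum_sum_powersetCard_erase (A : Finset ι) (r : ℕ) (f : Finset ι → ℝ) :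
    ∑ i ∈ A, ∑ s ∈ Finset.powersetCard r (A.erase i), f s
      = ((A.card - r : ℕ) : ℝ) * ∑ s ∈ Finset.powersetCard r A, f s := by
  by_cases hr : r ≤ A.card
  · simp only [powersetCard_erase_eq_filter, sum_filter]
    rw [Finset.sum_comm, Finset.mul_sum]
    refine Finset.sum_congr rfl fun s hs => ?_
    rw [mem_powersetCard] at hs
    rw [Finset.sum_ite, Finset.sum_const, Finset.sum_const_zero, add_zero,
      ← Finset.sdiff_eq_filter, card_sdiff_of_subset hs.1, hs.2, nsmul_eq_mul]
  · rw [Finset.powersetCard_eq_empty.mpr (by omega), Finset.sum_empty, mul_zero]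
    refine Finset.sum_eq_zero fun i hi => ?_
    rw [Finset.powersetCard_eq_empty.mpr (by rw [card_erase_of_mem hi]; omega), Finset.sum_empty]

lemma esymm_top (m : ℕ) (x : Fin (m+1) → ℝ) :
    esymm (m+1) (m+1) x = ∏ i, x i := by
  have hps : Finset.powersetCard (m+1) (Finset.univ : Finset (Fin (m+1))) = {Finset.univ} := by
    simpa using Finset.powersetCard_self (Finset.univ : Finset (Fin (m+1)))
  rw [esymm, hps, Finset.sum_singleton]

lemma esymm_pred (m : ℕ) (x : Fin (m+1) → ℝ) :
    esymm (m+1) m x = ∑ i, ∏ j ∈ Finset.univ.erase i, x j := by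
  have h := sum_powersetCard_pred (A := (Finset.univ : Finset (Fin (m+1))))
    Finset.univ_nonempty (fun s => ∏ j ∈ s, x j)
  simpa [esymm] using h

lemma newton_base (m : ℕ) (hm : 1 ≤ m) (x : Fin (m+1) → ℝ) :
    esymm (m+1) (m-1) x / ((m+1).choose (m-1) : ℝ)
      * (esymm (m+1) (m+1) x / ((m+1).choose (m+1) : ℝ))
      ≤ (esymm (m+1) m x / ((m+1).choose m : ℝ)) ^ 2 := by
  classical
  set e : Fin (m+1) → ℝ := fun i => ∏ j ∈ Finset.univ.erase i, x j with he
  set S := ∑ i, e i with hS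
  set Q := ∑ i, (e i) ^ 2 with hQ
  -- Cauchy-Schwarz
  have hCS : S ^ 2 ≤ (m + 1 : ℝ) * Q := by
    have := sq_sum_le_card_mul_sum_sq (s := (Finset.univ : Finset (Fin (m+1)))) (f := e)
    simpa using this
  -- σ_m = S
  have h1 : esymm (m+1) m x = S := esymm_pred m x
  -- key identity : 2 σ_{m-1} σ_{m+1} = S^2 - Q
  have h2 : 2 * (esymm (m+1) (m-1) x * esymm (m+1) (m+1) x) = S ^ 2 - Q := by
    have key : ((2 : ℕ) : ℝ) * esymm (m+1) (m-1) x
        = ∑ i, ∑ s ∈ Finset.powersetCard (m-1) (Finset.univ.erase i), ∏ j ∈ s, x j := by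
      have := sum_sum_powersetCard_erase (A := (Finset.univ : Finset (Fin (m+1))))
        (m-1) (fun s => ∏ j ∈ s, x j)
      rw [this, esymm]
      congr 1
      · congr 1
        simp; omega
    -- inner sum
    have inner : ∀ i : Fin (m+1),
        ∑ s ∈ Finset.powersetCard (m-1) (Finset.univ.erase i), ∏ j ∈ s, x j
          = ∑ j ∈ Finset.univ.erase i, ∏ l ∈ (Finset.univ.erase i).erase j, x l := by
      intro i
      have hcard : (Finset.univ.erase i).card = m := by
        rw [Finset.card_erase_of_mem (Finset.mem_univ i)]; simp
      have hne : (Finset.univ.erase i).Nonempty := by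
        rw [← Finset.card_pos, hcard]; omega
      have := sum_powersetCard_pred hne (fun s => ∏ j ∈ s, x j)
      rw [hcard] at this
      have hm1 : m - 1 = m - 1 := rfl
      convert this using 2
    -- product formula
    have eprod : ∀ i : Fin (m+1), ∀ j ∈ Finset.univ.erase i,
        e i * e j = esymm (m+1) (m+1) x * ∏ l ∈ (Finset.univ.erase i).erase j, x l := by
      intro i j hj
      have hji : j ≠ i := (Finset.mem_erase.mp hj).1
      have hij : i ∈ Finset.univ.erase j := Finset.mem_erase.mpr ⟨fun h => hji h.symm, Finset.mem_univ i⟩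
      have e1 : e i = x j * ∏ l ∈ (Finset.univ.erase i).erase j, x l :=
        (Finset.mul_prod_erase _ _ hj).symm
      have e2 : e j = x i * ∏ l ∈ (Finset.univ.erase j).erase i, x l :=
        (Finset.mul_prod_erase _ _ hij).symm
      have ecomm : (Finset.univ.erase j).erase i = (Finset.univ.erase i).erase j :=
        Finset.erase_right_comm
      have etop : esymm (m+1) (m+1) x
          = x i * (x j * ∏ l ∈ (Finset.univ.erase i).erase j, x l) := by
        rw [esymm_top, ← e1, he]
        exact (Finset.mul_prod_erase _ _ (Finset.mem_univ i)).symm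
      rw [e1, e2, ecomm, etop]; ring
    calc 2 * (esymm (m+1) (m-1) x * esymm (m+1) (m+1) x)
        = (((2:ℕ):ℝ) * esymm (m+1) (m-1) x) * esymm (m+1) (m+1) x := by push_cast; ring
      _ = (∑ i, ∑ s ∈ Finset.powersetCard (m-1) (Finset.univ.erase i), ∏ j ∈ s, x j)
            * esymm (m+1) (m+1) x := by rw [key]
      _ = ∑ i, ∑ j ∈ Finset.univ.erase i, e i * e j := by
          rw [Finset.sum_mul]
          refine Finset.sum_congr rfl fun i _ => ?_
          rw [inner i, Finset.sum_mul]
          refine Finset.sum_congr rfl fun j hj => ?_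
          rw [eprod i j hj]; ring
      _ = ∑ i, (e i * S - e i * e i) := by
          refine Finset.sum_congr rfl fun i _ => ?_
          rw [← Finset.mul_sum, Finset.sum_erase_eq_sub (Finset.mem_univ i), ← hS]
          ring
      _ = S ^ 2 - Q := by
          rw [Finset.sum_sub_distrib, ← Finset.sum_mul, ← hS]
          simp only [← pow_two]
          rfl
  -- choose values
  have hc1 : ((m+1).choose (m+1) : ℝ) = 1 := by simp
  have hc2 : ((m+1).choose m : ℝ) = (m+1 : ℝ) := by
    rw [Nat.choose_succ_self_right]; push_cast; ring
  have hc3 : 2 * ((m+1).choose (m-1) : ℝ) = (m+1 : ℝ) * m := by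
    have h4 : (m+1).choose (m-1) = (m+1).choose 2 := by
      have hm2 : m - 1 = m + 1 - 2 := by omega
      rw [hm2, Nat.choose_symm (by omega : 2 ≤ m + 1)]
    have h5 : (m+1) * m.choose 1 = (m+1).choose 2 * 2 := by
      have := Nat.add_one_mul_choose_eq m 1
      simpa using this
    have h6 : (2 * (m+1).choose (m-1) : ℕ) = (m+1) * m := by
      rw [h4, Nat.choose_one_right] at *
      omega
    have h7 := congrArg (Nat.cast : ℕ → ℝ) h6
    push_cast at h7
    linarith [h7]
  have hm1 : (1:ℝ) ≤ (m:ℝ) := by exact_mod_cast hm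
  have hcpos : (0:ℝ) < ((m+1).choose (m-1) : ℝ) := by
    have : 0 < (m+1).choose (m-1) := Nat.choose_pos (by omega)
    exact_mod_cast this
  rw [hc1, hc2, h1, div_one, div_pow]
  rw [div_mul_eq_mul_div, div_le_div_iff₀ hcpos (by positivity)]
  nlinarith [hCS, hm1, hcpos, h2, sq_nonneg S]

lemma multiset_exists_fn (s : Multiset ℝ) :
    ∃ (x : Fin (Multiset.card s) → ℝ), Finset.univ.val.map x = s := by
  induction s using Quot.inductionOn with
  | _ l =>
    have hc : Multiset.card (l : Multiset ℝ) = l.length := rfl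
    refine ⟨fun i => l.get (Fin.cast hc i), ?_⟩
    rw [Fin.univ_val_map]
    have hl : List.ofFn (fun i => l.get (Fin.cast hc i)) = l := by
      apply List.ext_getElem
      · simp
      · intro i h1 h2; simp
    exact congrArg (fun t : List ℝ => (t : Multiset ℝ)) hl

lemma esymm_eq_multiset (n k : ℕ) (x : Fin n → ℝ) :
    esymm n k x = (Finset.univ.val.map x).esymm k := by
  rw [esymm, Finset.esymm_map_val]

lemma card_univ_map (n : ℕ) (x : Fin n → ℝ) :
    Multiset.card (Finset.univ.val.map x) = n := by
  simp

/-- Newton's inequality for arbitrary real tuples. -/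
lemma newton_fn : ∀ n m : ℕ, 1 ≤ m → m + 1 ≤ n → ∀ x : Fin n → ℝ,
    esymm n (m-1) x / (n.choose (m-1) : ℝ) * (esymm n (m+1) x / (n.choose (m+1) : ℝ))
      ≤ (esymm n m x / (n.choose m : ℝ)) ^ 2 := by
  intro n
  induction n using Nat.strong_induction_on with
  | _ n IH =>
    intro m hm hmn x
    rcases eq_or_lt_of_le hmn with heq | hlt
    · subst heq
      exact newton_base m hm x
    · -- n ≥ m + 2 : use the derivative reduction
      set s : Multiset ℝ := Finset.univ.val.map x with hs
      have hcards : Multiset.card s = n := card_univ_map n x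
      obtain ⟨t, ht, hrel⟩ := exists_deriv_multiset s (by omega)
      rw [hcards] at ht hrel
      obtain ⟨y, hy⟩ := multiset_exists_fn t
      have hesy : ∀ j, esymm (Multiset.card t) j y = t.esymm j := by
        intro j; rw [esymm_eq_multiset, hy]
      have hIH := IH (Multiset.card t) (by omega) m hm (by omega) y
      rw [hesy, hesy, hesy, ht] at hIH
      have claim : ∀ j, j ≤ n - 1 →
          esymm n j x / (n.choose j : ℝ) = t.esymm j / ((n-1).choose j : ℝ) := by
        intro j hj
        have hc1 : (0:ℝ) < (n.choose j : ℝ) := by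
          exact_mod_cast Nat.choose_pos (by omega : j ≤ n)
        have hc2 : (0:ℝ) < ((n-1).choose j : ℝ) := by
          exact_mod_cast Nat.choose_pos (by omega : j ≤ n - 1)
        have hidn : (n - j) * n.choose j = n * (n-1).choose j := by
          have h1 := Nat.add_one_mul_choose_eq (n-1) j
          have h2 := Nat.choose_succ_right_eq n j
          have h3 : n - 1 + 1 = n := by omega
          rw [h3] at h1
          calc (n - j) * n.choose j = n.choose j * (n - j) := Nat.mul_comm _ _
            _ = n.choose (j+1) * (j+1) := h2.symm
            _ = n * (n-1).choose j := h1.symm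
        have hid : ((n - j : ℕ) : ℝ) * (n.choose j : ℝ) = (n : ℝ) * ((n-1).choose j : ℝ) := by
          exact_mod_cast congrArg (Nat.cast : ℕ → ℝ) hidn
        have hr := hrel j (by omega)
        rw [← esymm_eq_multiset] at hr
        rw [div_eq_div_iff hc1.ne' hc2.ne']
        have h9 : (n:ℝ) * (esymm n j x * ((n-1).choose j : ℝ))
            = (n:ℝ) * (t.esymm j * (n.choose j : ℝ)) := by
          linear_combination (-(n.choose j : ℝ)) * hr - esymm n j x * hid
        exact mul_left_cancel₀ (by exact_mod_cast (by omega : n ≠ 0) : (n:ℝ) ≠ 0) h9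
      rw [claim (m-1) (by omega), claim m (by omega), claim (m+1) (by omega)]
      exact hIH

lemma esymm_zero' (n : ℕ) (x : Fin n → ℝ) : esymm n 0 x = 1 := by
  simp [esymm]

/-- The Maclaurin chain: `P_{m+1}^m ≤ P_m^{m+1}`. -/
lemma maclaurin_chain (n k : ℕ) (hkn : k ≤ n) (x : Fin n → ℝ)
    (hx : ∀ j, 1 ≤ j → j ≤ k → 0 < esymm n j x) :
    ∀ m, 1 ≤ m → m + 1 ≤ k →
      (esymm n (m+1) x / (n.choose (m+1) : ℝ)) ^ m
        ≤ (esymm n m x / (n.choose m : ℝ)) ^ (m+1) := by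
  intro m hm1
  induction m, hm1 using Nat.le_induction with
  | base =>
    intro h2
    have hnewton := newton_fn n 1 le_rfl (by omega) x
    simp only [Nat.sub_self, esymm_zero', Nat.choose_zero_right, Nat.cast_one, div_one,
      one_mul] at hnewton
    rw [pow_one]
    exact hnewton
  | succ m hm ihm =>
    intro hm2k
    have hP : ∀ j, 1 ≤ j → j ≤ k → 0 < esymm n j x / (n.choose j : ℝ) := by
      intro j h1 h2
      have : (0:ℝ) < (n.choose j : ℝ) := by
        exact_mod_cast Nat.choose_pos (le_trans h2 hkn)
      exact div_pos (hx j h1 h2) this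
    set A := esymm n m x / (n.choose m : ℝ)
    set B := esymm n (m+1) x / (n.choose (m+1) : ℝ)
    set D := esymm n (m+2) x / (n.choose (m+2) : ℝ)
    have hA : 0 < A := hP m hm (by omega)
    have hB : 0 < B := hP (m+1) (by omega) (by omega)
    have hD : 0 < D := hP (m+2) (by omega) hm2k
    have hNewton : A * D ≤ B ^ 2 := by
      have := newton_fn n (m+1) (by omega) (by omega) x
      simpa using this
    have hchain : B ^ m ≤ A ^ (m+1) := ihm (by omega)
    -- want : D ^ (m+1) ≤ B ^ (m+2)
    have h1 : D ^ (m+1) * A ^ (m+1) ≤ B ^ (2*(m+1)) := by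
      calc D ^ (m+1) * A ^ (m+1) = (A * D) ^ (m+1) := by rw [← mul_pow]; ring_nf
        _ ≤ (B ^ 2) ^ (m+1) := pow_le_pow_left₀ (by positivity) hNewton _
        _ = B ^ (2*(m+1)) := by rw [← pow_mul]
    have h2 : B ^ (2*(m+1)) = B ^ (m+2) * B ^ m := by
      rw [← pow_add]; congr 1; omega
    have h3 : B ^ (m+2) * B ^ m ≤ B ^ (m+2) * A ^ (m+1) :=
      mul_le_mul_of_nonneg_left hchain (by positivity)
    have h4 : D ^ (m+1) * A ^ (m+1) ≤ B ^ (m+2) * A ^ (m+1) := by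
      calc D ^ (m+1) * A ^ (m+1) ≤ B ^ (2*(m+1)) := h1
        _ = B ^ (m+2) * B ^ m := h2
        _ ≤ B ^ (m+2) * A ^ (m+1) := h3
    exact le_of_mul_le_mul_right h4 (by positivity)

/-- the Maclaurin inequality
`(σ_{k-1}(λ)/C(n,k−1))^{1/(k−1)} ≥ (σ_k(λ)/C(n,k))^{1/k}` holds on the Gårding cone `Γ_k`. -/
theorem maclaurin_gardingCone (n k : ℕ) (hk2 : 2 ≤ k) (hkn : k ≤ n) (x : Fin n → ℝ)
    (hx : ∀ j, 1 ≤ j → j ≤ k → 0 < esymm n j x) :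
    (esymm n k x / (n.choose k : ℝ)) ^ ((1 : ℝ) / (k : ℝ))
      ≤ (esymm n (k - 1) x / (n.choose (k - 1) : ℝ)) ^ ((1 : ℝ) / ((k : ℝ) - 1)) := by
  have hchain := maclaurin_chain n k hkn x hx (k-1) (by omega) (by omega)
  have hk1 : k - 1 + 1 = k := by omega
  rw [hk1] at hchain
  set a := esymm n k x / (n.choose k : ℝ) with ha
  set b := esymm n (k-1) x / (n.choose (k-1) : ℝ) with hb
  have hapos : 0 < a := by
    refine div_pos (hx k (by omega) le_rfl) ?_
    exact_mod_cast Nat.choose_pos hkn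
  have hbpos : 0 < b := by
    refine div_pos (hx (k-1) (by omega) (by omega)) ?_
    exact_mod_cast Nat.choose_pos (by omega : k - 1 ≤ n)
  -- hchain : a ^ (k-1) ≤ b ^ k  (natural powers)
  have hkR : ((k:ℝ) - 1) = ((k - 1 : ℕ) : ℝ) := by
    rw [Nat.cast_sub (by omega : 1 ≤ k)]; norm_num
  have hj : (0:ℝ) < ((k-1:ℕ):ℝ) := by exact_mod_cast (by omega : 0 < k - 1)
  have hkpos : (0:ℝ) < (k:ℝ) := by exact_mod_cast (by omega : 0 < k)
  have hscal : ((k-1:ℕ):ℝ) * ((1:ℝ)/(((k-1:ℕ):ℝ) * (k:ℝ))) = 1/(k:ℝ) := by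
    rw [one_div, mul_inv, ← mul_assoc, mul_inv_cancel₀ hj.ne', one_mul, one_div]
  have hscal2 : (k:ℝ) * ((1:ℝ)/(((k-1:ℕ):ℝ) * (k:ℝ))) = 1/((k:ℝ)-1) := by
    rw [hkR, one_div, mul_inv, mul_comm (((k-1:ℕ):ℝ))⁻¹, ← mul_assoc,
      mul_inv_cancel₀ hkpos.ne', one_mul, one_div]
  calc a ^ ((1:ℝ)/(k:ℝ))
      = (a ^ ((k-1:ℕ):ℝ)) ^ ((1:ℝ)/(((k-1:ℕ):ℝ) * (k:ℝ))) := by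
        rw [← Real.rpow_mul hapos.le, hscal]
    _ ≤ (b ^ ((k:ℕ):ℝ)) ^ ((1:ℝ)/(((k-1:ℕ):ℝ) * (k:ℝ))) := by
        refine Real.rpow_le_rpow (by positivity) ?_ (by positivity)
        rw [Real.rpow_natCast, Real.rpow_natCast]
        exact_mod_cast hchain
    _ = b ^ ((1:ℝ)/((k:ℝ)-1)) := by
        rw [← Real.rpow_mul hbpos.le, hscal2]
end
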